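/- Let G be a finite graph on vertex set V over a field F. If G admits an independent representation over F^s, then there exists a V×V matrix over F of rank at most s that represents the complement of G (i.e., has nonzero diagonal entries and zero entries A_{u,v} for every edge uv of G with u ≠ v). -/

import Mathlib

/-- If a finite graph `G` admits an independent representation over `F^s`, then
there is a `V × V` matrix over `F` of rank at most `s` representing the complement of `G`
(nonzero diagonal, and zero entries on edges of `G`). -/
theorem matrix_of_indep_rep {V : Type*} [Fintype V] [DecidableEq V] (G : SimpleGraph V)
    (F : Type*) [Field F] (s : ℕ) (x : V → (Fin s → F))
    (hind : ∀ v, x v ∉ Submodule.span F (x '' (G.neighborSet v))) :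
    ∃ A : Matrix V V F, A.rank ≤ s ∧ (∀ u, A u u ≠ 0) ∧
      ∀ u v, G.Adj u v → A u v = 0 := by
  have hf : ∀ u, ∃ f : Module.Dual F (Fin s → F), f (x u) ≠ 0 ∧
      (Submodule.span F (x '' (G.neighborSet u))).map f = ⊥ :=
    fun u => Submodule.exists_dual_map_eq_bot_of_notMem (hind u) inferInstance
  choose f hf0 hfb using hf
  set B : Matrix V (Fin s) F := fun u i => f u (Pi.single i 1) with hB
  set C : Matrix (Fin s) V F := fun i v => x v i with hC
  refine ⟨B * C, ?_, ?_, ?_⟩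
  · exact (Matrix.rank_mul_le_right B C).trans (C.rank_le_card_height.trans (by simp))
  all_goals
    have key : ∀ u v, (B * C) u v = f u (x v) := by
      intro u v
      have : x v = ∑ i, x v i • (Pi.single i 1 : Fin s → F) := by
        ext j; simp [Pi.single_apply, mul_comm]
      rw [this, map_sum]
      rw [Matrix.mul_apply]; simp [hB, hC, mul_comm]
  · intro u; rw [key]; exact hf0 u
  · intro u v huv
    rw [key]
    have hx : x v ∈ Submodule.span F (x '' (G.neighborSet u)) :=
      Submodule.subset_span ⟨v, huv, rfl⟩
    have := hfb u
    have : f u (x v) ∈ (Submodule.span F (x '' (G.neighborSet u))).map (f u) :=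
      ⟨x v, hx, rfl⟩
    simpa [hfb u] using this
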